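/- Let l₁, l₂, l₃ ≥ 2 and let G be the theta graph consisting of two vertices P and Q joined by three internally disjoint paths of lengths l₁, l₂, l₃ (so the i-th path has lᵢ − 1 internal vertices of degree 2). Set aᵢ = u^{lᵢ} for a complex number u. Then det(I − u·B) = (1 − (a₁a₂ + a₂a₃ + a₃a₁) − 2a₁a₂a₃)·(1 − (a₁a₂ + a₂a₃ + a₃a₁) + 2a₁a₂a₃), where B is the non-backtracking edge-adjacency matrix of G. -/

import Mathlib

open Matrix

/-- Vertices of the theta graph: the two endpoints `P = inl false`, `Q = inl true`,
together with the internal vertices of the three paths (`lᵢ − 1` internal vertices on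
the `i`-th path). -/
abbrev ThetaV (l : Fin 3 → ℕ) := Bool ⊕ (Σ i : Fin 3, Fin (l i - 1))

/-- One-way adjacency relation of the theta graph: `P` is joined to the `0`-th internal
vertex of each path, consecutive internal vertices of a path are joined, and the last
internal vertex of each path is joined to `Q`. -/
def thetaR (l : Fin 3 → ℕ) : ThetaV l → ThetaV l → Bool
  | Sum.inl false, Sum.inr ⟨_, k⟩ => k.val == 0
  | Sum.inr ⟨i, k⟩, Sum.inr ⟨j, m⟩ => i == j && (m.val == k.val + 1)
  | Sum.inr ⟨i, k⟩, Sum.inl true => k.val == l i - 2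
  | _, _ => false

/-- The theta graph: two vertices joined by three internally disjoint paths of lengths
`l 0`, `l 1`, `l 2`. -/
def thetaGraph (l : Fin 3 → ℕ) : SimpleGraph (ThetaV l) where
  Adj a b := thetaR l a b ∨ thetaR l b a
  symm := ⟨fun a b h => h.symm⟩
  loopless := by
    constructor
    rintro ((_ | _) | ⟨i, k⟩) h <;>
      · simp [thetaR] at h

instance (l : Fin 3 → ℕ) : DecidableRel (thetaGraph l).Adj := fun a b =>
  inferInstanceAs (Decidable (_ ∨ _))

/-- A dart `d'` follows a dart `d` without backtracking. -/
def FollowsNB {V : Type*} {G : SimpleGraph V} (d' d : G.Dart) : Prop :=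
  d'.fst = d.snd ∧ d' ≠ d.symm

instance {V : Type*} {G : SimpleGraph V} [DecidableEq V] (d' d : G.Dart) :
    Decidable (FollowsNB d' d) :=
  inferInstanceAs (Decidable (_ ∧ _))

/-- The non-backtracking edge-adjacency matrix of a finite simple graph. -/
def nbMatrix {V : Type*} (G : SimpleGraph V) [Fintype V] [DecidableEq V]
    [DecidableRel G.Adj] : Matrix G.Dart G.Dart ℂ :=
  fun d' d => if FollowsNB d' d then 1 else 0

namespace Theta

abbrev D (l : Fin 3 → ℕ) := (i : Fin 3) × (Fin (l i) × Bool)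

variable (l : Fin 3 → ℕ)

def vtx (i : Fin 3) (a : ℕ) : Bool ⊕ (Σ i : Fin 3, Fin (l i - 1)) :=
  if h0 : a = 0 then Sum.inl false
  else if h : a < l i then Sum.inr ⟨i, ⟨a - 1, by omega⟩⟩
  else Sum.inl true

variable (hl : ∀ i, 2 ≤ l i)
include hl

lemma vtx_eq_iff {i j : Fin 3} {a b : ℕ} (ha : a ≤ l i) (hb : b ≤ l j) :
    vtx l i a = vtx l j b ↔ (a = 0 ∧ b = 0) ∨ (a = l i ∧ b = l j) ∨ (i = j ∧ a = b) := by
  have h2i := hl i; have h2j := hl j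
  constructor
  · intro h
    unfold vtx at h
    split_ifs at h with h1 h2 h3 h4 h5 h6 h7 h8 <;>
      first
      | (exact Or.inl ⟨by omega, by omega⟩)
      | (exact Or.inr (Or.inl ⟨by omega, by omega⟩))
      | (rcases Sigma.mk.inj_iff.mp (Sum.inr.inj h) with ⟨rfl, hh⟩
         have hv : a - 1 = b - 1 := congrArg Fin.val (eq_of_heq hh)
         exact Or.inr (Or.inr ⟨rfl, by omega⟩))
      | simp at h
  · rintro (⟨rfl, rfl⟩ | ⟨rfl, rfl⟩ | ⟨rfl, rfl⟩)
    · rfl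
    · unfold vtx
      rw [dif_neg (by omega), dif_neg (by omega), dif_neg (by omega), dif_neg (by omega)]
    · rfl


lemma adj_step (i : Fin 3) {k : ℕ} (hk : k < l i) :
    (thetaGraph l).Adj (vtx l i k) (vtx l i (k + 1)) := by
  have h2 := hl i
  left
  unfold vtx
  rcases Nat.eq_zero_or_pos k with rfl | hk0
  · rw [dif_pos rfl, dif_neg (by omega), dif_pos (by omega)]
    simp [thetaR]
  · rw [dif_neg (by omega)]
    by_cases hk1 : k + 1 < l i
    · rw [dif_pos (by omega), dif_neg (by omega), dif_pos hk1]
      simp [thetaR]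
      omega
    · rw [dif_pos (by omega), dif_neg (by omega), dif_neg (by omega)]
      simp [thetaR]
      omega

def dart (x : D l) : (thetaGraph l).Dart :=
  if hb : x.2.2 then ⟨(vtx l x.1 x.2.1, vtx l x.1 (x.2.1 + 1)), adj_step l hl x.1 x.2.1.isLt⟩
  else ⟨(vtx l x.1 (x.2.1 + 1), vtx l x.1 x.2.1), (adj_step l hl x.1 x.2.1.isLt).symm⟩

def rev (x : D l) : D l := ⟨x.1, (x.2.1, !x.2.2)⟩

omit hl in
lemma D_ext_iff {x y : D l} :
    x = y ↔ x.1 = y.1 ∧ (x.2.1 : ℕ) = (y.2.1 : ℕ) ∧ x.2.2 = y.2.2 := by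
  constructor
  · rintro rfl; exact ⟨rfl, rfl, rfl⟩
  · rcases x with ⟨i, k, b⟩; rcases y with ⟨j, m, c⟩
    rintro ⟨h1, h2, h3⟩
    dsimp at h1 h2 h3
    subst h1; subst h3
    obtain rfl : k = m := Fin.ext h2
    rfl

lemma dart_symm (x : D l) : (dart l hl x).symm = dart l hl (rev l x) := by
  rcases x with ⟨i, k, (_ | _)⟩ <;>
    · apply SimpleGraph.Dart.ext
      rfl

lemma dart_fst (x : D l) :
    (dart l hl x).fst = if x.2.2 then vtx l x.1 x.2.1 else vtx l x.1 (x.2.1 + 1) := by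
  rcases x with ⟨i, k, (_ | _)⟩ <;> rfl

lemma dart_snd (x : D l) :
    (dart l hl x).snd = if x.2.2 then vtx l x.1 (x.2.1 + 1) else vtx l x.1 x.2.1 := by
  rcases x with ⟨i, k, (_ | _)⟩ <;> rfl

lemma dart_inj : Function.Injective (dart l hl) := by
  rintro ⟨i, k, bi⟩ ⟨j, m, bj⟩ h
  have h2i := hl i; have h2j := hl j
  have hki := k.isLt; have hmj := m.isLt
  rw [SimpleGraph.Dart.ext_iff, Prod.ext_iff] at h
  obtain ⟨hf, hs⟩ := h
  cases bi <;> cases bj <;>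
      simp only [dart, reduceDIte, Bool.false_eq_true, not_false_iff] at hf hs <;>
      rw [vtx_eq_iff l hl (by omega) (by omega)] at hf <;>
      rw [vtx_eq_iff l hl (by omega) (by omega)] at hs
  · -- false false
    have key : i = j ∧ (k : ℕ) = (m : ℕ) := by
      rcases hf with ⟨h1, h2⟩ | ⟨h1, h2⟩ | ⟨rfl, h2⟩
      · omega
      · rcases hs with ⟨h3, h4⟩ | ⟨h3, h4⟩ | ⟨rfl, h4⟩
        · omega
        · omega
        · exact ⟨rfl, by omega⟩
      · exact ⟨rfl, by omega⟩
    obtain ⟨rfl, hkm⟩ := key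
    exact (D_ext_iff l).mpr ⟨rfl, hkm, rfl⟩
  · -- false true
    exfalso
    rcases hf with ⟨h1, h2⟩ | ⟨h1, h2⟩ | ⟨rfl, h2⟩
    · omega
    · omega
    · rcases hs with ⟨h3, h4⟩ | ⟨h3, h4⟩ | ⟨-, h4⟩ <;> omega
  · -- true false
    exfalso
    rcases hf with ⟨h1, h2⟩ | ⟨h1, h2⟩ | ⟨rfl, h2⟩
    · omega
    · omega
    · rcases hs with ⟨h3, h4⟩ | ⟨h3, h4⟩ | ⟨-, h4⟩ <;> omega
  · -- true true
    have key : i = j ∧ (k : ℕ) = (m : ℕ) := by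
      rcases hf with ⟨h1, h2⟩ | ⟨h1, h2⟩ | ⟨rfl, h2⟩
      · rcases hs with ⟨h3, h4⟩ | ⟨h3, h4⟩ | ⟨rfl, h4⟩
        · omega
        · omega
        · exact ⟨rfl, by omega⟩
      · omega
      · exact ⟨rfl, by omega⟩
    obtain ⟨rfl, hkm⟩ := key
    exact (D_ext_iff l).mpr ⟨rfl, hkm, rfl⟩


omit hl in
lemma vtx_inr {i : Fin 3} {a : ℕ} (m : Fin (l i - 1)) (h0 : a ≠ 0) (h1 : a < l i)
    (hm : a - 1 = (m : ℕ)) : vtx l i a = Sum.inr ⟨i, m⟩ := by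
  unfold vtx; rw [dif_neg h0, dif_pos h1]
  exact congrArg Sum.inr (Sigma.ext rfl (heq_of_eq (Fin.ext hm)))

omit hl in
lemma vtx_top {i : Fin 3} {a : ℕ} (h0 : a ≠ 0) (h1 : ¬ a < l i) :
    vtx l i a = Sum.inl true := by
  unfold vtx; rw [dif_neg h0, dif_neg h1]

lemma dart_surj : Function.Surjective (dart l hl) := by
  rintro ⟨⟨a, b⟩, hab⟩
  have key : ∃ x : D l, (dart l hl x).toProd = (a, b) := by
    have hab' : thetaR l a b = true ∨ thetaR l b a = true := hab
    rcases a with (_ | _) | ⟨i, k⟩ <;> rcases b with (_ | _) | ⟨j, m⟩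
    · simp [thetaR] at hab'
    · simp [thetaR] at hab'
    · -- a = P, b internal on path j : m = 0
      simp [thetaR] at hab'
      have h2 := hl j
      refine ⟨⟨j, ⟨0, by omega⟩, true⟩, ?_⟩
      show (vtx l j 0, vtx l j 1) = _
      rw [vtx_inr l m (by omega) (by omega) (by omega : 1 - 1 = (m : ℕ))]
      rfl
    · simp [thetaR] at hab'
    · simp [thetaR] at hab'
    · -- a = Q, b internal : m = l j - 2
      simp [thetaR] at hab'
      have h2 := hl j
      have hmlt := m.isLt
      refine ⟨⟨j, ⟨l j - 1, by omega⟩, false⟩, ?_⟩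
      show (vtx l j (l j - 1 + 1), vtx l j (l j - 1)) = _
      rw [vtx_top l (by omega) (by omega), vtx_inr l m (by omega) (by omega) (by omega)]
    · -- a internal, b = P : k = 0
      simp [thetaR] at hab'
      have h2 := hl i
      refine ⟨⟨i, ⟨0, by omega⟩, false⟩, ?_⟩
      show (vtx l i 1, vtx l i 0) = _
      rw [vtx_inr l k (by omega) (by omega) (by omega)]
      rfl
    · -- a internal, b = Q : k = l i - 2
      simp [thetaR] at hab'
      have h2 := hl i
      have hklt := k.isLt
      refine ⟨⟨i, ⟨l i - 1, by omega⟩, true⟩, ?_⟩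
      show (vtx l i (l i - 1), vtx l i (l i - 1 + 1)) = _
      rw [vtx_inr l k (by omega) (by omega) (by omega), vtx_top l (by omega) (by omega)]
    · -- both internal
      simp only [thetaR, Bool.and_eq_true, beq_iff_eq] at hab'
      have h2i := hl i; have h2j := hl j
      have hklt := k.isLt; have hmlt := m.isLt
      rcases hab' with ⟨rfl, hm⟩ | ⟨rfl, hk⟩
      · refine ⟨⟨i, ⟨(k : ℕ) + 1, by omega⟩, true⟩, ?_⟩
        show (vtx l i ((k : ℕ) + 1), vtx l i ((k : ℕ) + 1 + 1)) = _
        rw [vtx_inr l k (by omega) (by omega) (by omega),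
          vtx_inr l m (by omega) (by omega) (by omega)]
      · refine ⟨⟨j, ⟨(m : ℕ) + 1, by omega⟩, false⟩, ?_⟩
        show (vtx l j ((m : ℕ) + 1 + 1), vtx l j ((m : ℕ) + 1)) = _
        rw [vtx_inr l k (by omega) (by omega) (by omega),
          vtx_inr l m (by omega) (by omega) (by omega)]
  obtain ⟨x, hx⟩ := key
  exact ⟨x, SimpleGraph.Dart.ext _ _ hx⟩

noncomputable def eqv : D l ≃ (thetaGraph l).Dart :=
  Equiv.ofBijective _ ⟨dart_inj l hl, dart_surj l hl⟩


def SP (x y : D l) : Prop :=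
  x.1 = y.1 ∧ x.2.2 = y.2.2 ∧
    ((y.2.2 = true ∧ (x.2.1 : ℕ) = (y.2.1 : ℕ) + 1) ∨
     (y.2.2 = false ∧ (x.2.1 : ℕ) + 1 = (y.2.1 : ℕ)))

def JP (x y : D l) : Prop :=
  x.1 ≠ y.1 ∧
    ((y.2.2 = true ∧ x.2.2 = false ∧ (y.2.1 : ℕ) = l y.1 - 1 ∧ (x.2.1 : ℕ) = l x.1 - 1) ∨
     (y.2.2 = false ∧ x.2.2 = true ∧ (y.2.1 : ℕ) = 0 ∧ (x.2.1 : ℕ) = 0))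

instance (x y : D l) : Decidable (SP l x y) := by unfold SP; infer_instance
instance (x y : D l) : Decidable (JP l x y) := by unfold JP; infer_instance

omit hl in
lemma not_SP_and_JP {x y : D l} (hS : SP l x y) (hJ : JP l x y) : False :=
  hJ.1 hS.1

lemma follows_iff (x y : D l) :
    FollowsNB (dart l hl x) (dart l hl y) ↔ SP l x y ∨ JP l x y := by
  obtain ⟨j, m, c⟩ := x; obtain ⟨i, k, b⟩ := y
  have h2i := hl i; have h2j := hl j
  have hki := k.isLt; have hmj := m.isLt
  unfold FollowsNB
  rw [dart_symm, ne_eq, (dart_inj l hl).eq_iff, dart_fst, dart_snd]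
  cases c <;> cases b <;>
    simp only [rev, SP, JP, D_ext_iff, Bool.false_eq_true, Bool.true_eq_false, ne_eq,
      Bool.not_false, Bool.not_true, if_true, if_false, reduceIte, true_and, and_true,
      false_and, and_false, true_or, or_true, false_or, or_false, not_false_iff] <;>
    rw [vtx_eq_iff l hl (by omega) (by omega)]
  · -- c = false, b = false
    constructor
    · rintro (⟨h1, h2⟩ | ⟨h1, h2⟩ | ⟨rfl, h2⟩)
      · exact absurd h1 (by omega)
      · exact absurd h2 (by omega)
      · exact ⟨rfl, h2⟩
    · rintro ⟨rfl, h⟩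
      exact Or.inr (Or.inr ⟨rfl, h⟩)
  · -- c = false, b = true
    constructor
    · rintro ⟨(⟨h1, h2⟩ | ⟨h1, h2⟩ | ⟨rfl, h2⟩), hne⟩
      · exact absurd h1 (by omega)
      · refine ⟨?_, by omega, by omega⟩
        rintro rfl
        exact hne ⟨rfl, by omega⟩
      · exact absurd ⟨rfl, by omega⟩ hne
    · rintro ⟨hne, hk, hm⟩
      refine ⟨Or.inr (Or.inl ⟨by omega, by omega⟩), ?_⟩
      rintro ⟨rfl, -⟩
      exact hne rfl
  · -- c = true, b = false
    constructor
    · rintro ⟨(⟨h1, h2⟩ | ⟨h1, h2⟩ | ⟨rfl, h2⟩), hne⟩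
      · refine ⟨?_, by omega, by omega⟩
        rintro rfl
        exact hne ⟨rfl, by omega⟩
      · exact absurd h1 (by omega)
      · exact absurd ⟨rfl, by omega⟩ hne
    · rintro ⟨hne, hk, hm⟩
      refine ⟨Or.inl ⟨by omega, by omega⟩, ?_⟩
      rintro ⟨rfl, -⟩
      exact hne rfl
  · -- c = true, b = true
    constructor
    · rintro (⟨h1, h2⟩ | ⟨h1, h2⟩ | ⟨rfl, h2⟩)
      · exact absurd h2 (by omega)
      · exact absurd h1 (by omega)
      · exact ⟨rfl, h2⟩
    · rintro ⟨rfl, h⟩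
      exact Or.inr (Or.inr ⟨rfl, h⟩)

def Smat : Matrix (D l) (D l) ℂ := fun x y => if SP l x y then 1 else 0
def Jmat : Matrix (D l) (D l) ℂ := fun x y => if JP l x y then 1 else 0


lemma nb_entry (x y : D l) :
    nbMatrix (thetaGraph l) (dart l hl x) (dart l hl y) = Smat l x y + Jmat l x y := by
  simp only [nbMatrix, Smat, Jmat]
  by_cases hS : SP l x y
  · rw [if_pos hS, if_neg (fun hJ => not_SP_and_JP l hS hJ),
      if_pos ((follows_iff l hl x y).mpr (Or.inl hS)), add_zero]
  · by_cases hJ : JP l x y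
    · rw [if_neg hS, if_pos hJ, if_pos ((follows_iff l hl x y).mpr (Or.inr hJ)), zero_add]
    · rw [if_neg hS, if_neg hJ,
        if_neg (fun h => ((follows_iff l hl x y).mp h).elim hS hJ), add_zero]

lemma det_transfer (u : ℂ) :
    (1 - u • nbMatrix (thetaGraph l)).det = (1 - u • (Smat l + Jmat l)).det := by
  rw [← Matrix.det_submatrix_equiv_self (eqv l hl)]
  congr 1
  ext x y
  have he : ∀ z : D l, eqv l hl z = dart l hl z := fun _ => rfl
  simp only [Matrix.submatrix_apply, Matrix.sub_apply, Matrix.smul_apply, smul_eq_mul,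
    Matrix.add_apply, he]
  rw [nb_entry l hl x y]
  congr 1
  rw [Matrix.one_apply, Matrix.one_apply]
  simp [(dart_inj l hl).eq_iff]

def wt (x : D l) : ℕ := if x.2.2 then l x.1 - 1 - (x.2.1 : ℕ) else (x.2.1 : ℕ)

omit hl in
lemma SP_wt {x y : D l} (h : SP l x y) : wt l x < wt l y := by
  obtain ⟨h1, h2, h3⟩ := h
  obtain ⟨j, m, c⟩ := x; obtain ⟨i, k, b⟩ := y
  dsimp at h1 h2 h3
  subst h1; subst h2
  have hm := m.isLt; have hk := k.isLt
  unfold wt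
  rcases h3 with ⟨hb, h⟩ | ⟨hb, h⟩ <;> subst hb <;> dsimp <;> omega

omit hl in
lemma det_S (u : ℂ) : (1 - u • Smat l).det = 1 := by
  have hbt : (1 - u • Smat l).BlockTriangular (wt l) := by
    intro x y hxy
    have hne : x ≠ y := fun h => by subst h; exact lt_irrefl _ hxy
    simp only [Matrix.sub_apply, Matrix.smul_apply, Matrix.one_apply_ne hne, smul_eq_mul]
    rw [Smat, if_neg (fun h => absurd (SP_wt l h) (by omega))]
    ring
  rw [hbt.det]
  apply Finset.prod_eq_one
  intro a _
  have hblock : (1 - u • Smat l).toSquareBlock (wt l) a = 1 := by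
    ext ⟨x, hx⟩ ⟨y, hy⟩
    rw [Matrix.toSquareBlock_def]
    by_cases h : x = y
    · subst h
      have hS : ¬ SP l x x := fun h => lt_irrefl _ (SP_wt l h)
      simp [Matrix.one_apply, Smat, hS]
    · have hS : ¬ SP l x y := fun hS => by
        have := SP_wt l hS
        omega
      have hne : (⟨x, hx⟩ : {z // wt l z = a}) ≠ ⟨y, hy⟩ := by
        simpa [Subtype.ext_iff] using h
      simp [Matrix.one_apply, Smat, hS, h, hne]
  rw [hblock, Matrix.det_one]


def Pmat (u : ℂ) : Matrix (D l) (D l) ℂ := fun x y =>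
  if x.1 = y.1 ∧ x.2.2 = y.2.2 ∧
      ((y.2.2 = true ∧ (y.2.1 : ℕ) ≤ (x.2.1 : ℕ)) ∨
       (y.2.2 = false ∧ (x.2.1 : ℕ) ≤ (y.2.1 : ℕ)))
  then u ^ (if y.2.2 then (x.2.1 : ℕ) - (y.2.1 : ℕ) else (y.2.1 : ℕ) - (x.2.1 : ℕ)) else 0

def succD (y : D l) : Option (D l) :=
  if y.2.2 then
    (if h2 : (y.2.1 : ℕ) + 1 < l y.1 then some ⟨y.1, (⟨(y.2.1 : ℕ) + 1, h2⟩, true)⟩ else none)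
  else
    (if h2 : 0 < (y.2.1 : ℕ) then
      some ⟨y.1, (⟨(y.2.1 : ℕ) - 1, by have := y.2.1.isLt; omega⟩, false)⟩ else none)

omit hl in
lemma SP_iff_succ (z y : D l) : SP l z y ↔ succD l y = some z := by
  obtain ⟨j, m, c⟩ := z; obtain ⟨i, k, b⟩ := y
  have hki := k.isLt; have hmj := m.isLt
  unfold SP succD
  cases c <;> cases b <;>
    simp only [Bool.false_eq_true, Bool.true_eq_false, if_true, if_false, reduceIte,
      true_and, and_true, false_and, and_false, true_or, or_true, false_or, or_false] <;>
    split_ifs with h2 <;>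
    simp only [Option.some.injEq, D_ext_iff, reduceCtorEq, Bool.false_eq_true,
      Bool.true_eq_false, true_and, and_true, and_false, false_and, iff_false,
      false_iff, not_and, not_false_iff, iff_true, true_iff]
  all_goals
    first
      | (rintro rfl h; omega)
      | (constructor <;> (rintro ⟨rfl, h⟩; exact ⟨rfl, by omega⟩))


omit hl in
lemma P_inv (u : ℂ) : Pmat l u * (1 - u • Smat l) = 1 := by
  ext x y
  rw [Matrix.mul_apply]
  have hrw : ∀ z : D l, Smat l z y = if succD l y = some z then 1 else 0 := fun z =>
    if_congr (SP_iff_succ l z y) rfl rfl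
  have expand : ∀ z : D l,
      Pmat l u x z * ((1 - u • Smat l) z y)
        = (if z = y then Pmat l u x z else 0)
          - u * (if succD l y = some z then Pmat l u x z else 0) := by
    intro z
    simp only [Matrix.sub_apply, Matrix.smul_apply, Matrix.one_apply, smul_eq_mul, hrw z]
    split_ifs <;> ring
  rw [Finset.sum_congr rfl fun z _ => expand z, Finset.sum_sub_distrib,
    Finset.sum_ite_eq' Finset.univ y (Pmat l u x), ← Finset.mul_sum]
  simp only [Finset.mem_univ, if_true]
  cases hsucc : succD l y with
  | none =>
    rw [Finset.sum_eq_zero (fun z _ => by simp), mul_zero, sub_zero]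
    obtain ⟨j, m, c⟩ := x; obtain ⟨i, k, b⟩ := y
    have hki := k.isLt; have hmj := m.isLt
    have hcond : (b = true ∧ (k : ℕ) + 1 = l i) ∨ (b = false ∧ (k : ℕ) = 0) := by
      unfold succD at hsucc
      cases b <;>
        simp only [if_true, if_false, reduceIte, Bool.false_eq_true,
          Bool.true_eq_false] at hsucc <;>
        split_ifs at hsucc with h2 <;> simp_all <;> omega
    rw [Matrix.one_apply]
    unfold Pmat
    simp only [D_ext_iff]
    by_cases hji : j = i
    · subst hji
      rcases hcond with ⟨rfl, hk⟩ | ⟨rfl, hk⟩ <;> cases c <;>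
        simp only [if_true, if_false, reduceIte, Bool.false_eq_true, Bool.true_eq_false,
          true_and, and_true, false_and, and_false, true_or, or_true, false_or, or_false] <;>
        (try split_ifs) <;>
        first
          | (exfalso; omega)
          | rfl
          | (rw [show (m : ℕ) - (k : ℕ) = 0 from by omega]; simp)
          | (rw [show (k : ℕ) - (m : ℕ) = 0 from by omega]; simp)
          | ring
          | (simp; omega)
    · simp [hji]
  | some z₀ =>
    have hcg : ∀ z : D l, (if (some z₀ : Option (D l)) = some z then Pmat l u x z else 0)
        = if z = z₀ then Pmat l u x z else 0 := by
      intro z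
      apply if_congr _ rfl rfl
      simp [eq_comm]
    rw [Finset.sum_congr rfl fun z _ => hcg z,
      Finset.sum_ite_eq' Finset.univ z₀ (Pmat l u x)]
    simp only [Finset.mem_univ, if_true]
    obtain ⟨j, m, c⟩ := x; obtain ⟨i, k, b⟩ := y
    have hki := k.isLt; have hmj := m.isLt
    rw [Matrix.one_apply]
    unfold succD at hsucc
    cases b
    · simp only [if_true, if_false, reduceIte, Bool.false_eq_true, Bool.true_eq_false]
        at hsucc
      split_ifs at hsucc with h2
      · obtain rfl := (Option.some.inj hsucc)
        unfold Pmat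
        simp only [D_ext_iff]
        by_cases hji : j = i
        · subst hji
          cases c <;>
            simp only [if_true, if_false, reduceIte, Bool.false_eq_true, Bool.true_eq_false,
              true_and, and_true, false_and, and_false, true_or, or_true, false_or,
              or_false] <;>
            (try split_ifs) <;>
            first
              | (exfalso; omega)
              | (rw [show (k : ℕ) - (m : ℕ) = ((k : ℕ) - 1 - (m : ℕ)) + 1 from by omega,
                  pow_succ']; ring)
              | (rw [show (k : ℕ) - (m : ℕ) = 0 from by omega]; simp)
              | ring
              | (simp; omega)
        · simp [hji]
    · simp only [if_true, if_false, reduceIte, Bool.false_eq_true, Bool.true_eq_false]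
        at hsucc
      split_ifs at hsucc with h2
      · obtain rfl := (Option.some.inj hsucc)
        unfold Pmat
        simp only [D_ext_iff]
        by_cases hji : j = i
        · subst hji
          cases c <;>
            simp only [if_true, if_false, reduceIte, Bool.false_eq_true, Bool.true_eq_false,
              true_and, and_true, false_and, and_false, true_or, or_true, false_or,
              or_false] <;>
            (try split_ifs) <;>
            first
              | (exfalso; omega)
              | (rw [show (m : ℕ) - (k : ℕ) = ((m : ℕ) - ((k : ℕ) + 1)) + 1 from by omega,
                  pow_succ']; ring)
              | (rw [show (m : ℕ) - (k : ℕ) = 0 from by omega]; simp)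
              | ring
              | (simp; omega)
        · simp [hji]

def spec : Fin 3 ⊕ Fin 3 → D l
  | Sum.inl i => ⟨i, (⟨l i - 1, by have := hl i; omega⟩, true)⟩
  | Sum.inr i => ⟨i, (⟨0, by have := hl i; omega⟩, false)⟩

lemma spec_inj : Function.Injective (spec l hl) := by
  rintro (a | a) (b | b) h <;>
    obtain ⟨h1, h2, h3⟩ := (D_ext_iff l).mp h <;>
    simp only [spec] at h1 h3 <;> simp_all

lemma Jmat_eq_zero {y : D l} (hy : ∀ a, y ≠ spec l hl a) (x : D l) : Jmat l x y = 0 := by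
  rw [Jmat, if_neg]
  rintro ⟨-, (⟨hb, -, hk, -⟩ | ⟨hb, -, hk, -⟩)⟩
  · exact hy (Sum.inl y.1) ((D_ext_iff l).mpr ⟨rfl, by simp [spec]; omega, hb⟩)
  · exact hy (Sum.inr y.1) ((D_ext_iff l).mpr ⟨rfl, by simp [spec]; omega, hb⟩)

def Frow : Matrix (Fin 3 ⊕ Fin 3) (D l) ℂ := fun a y => if y = spec l hl a then 1 else 0

noncomputable def Ecol (u : ℂ) : Matrix (D l) (Fin 3 ⊕ Fin 3) ℂ :=
  fun x a => (Pmat l u * (u • Jmat l)) x (spec l hl a)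

lemma K_factor (u : ℂ) : Pmat l u * (u • Jmat l) = Ecol l hl u * Frow l hl := by
  ext x y
  rw [Matrix.mul_apply (M := Ecol l hl u)]
  by_cases hy : ∃ a, y = spec l hl a
  · obtain ⟨a₀, rfl⟩ := hy
    rw [Finset.sum_eq_single a₀]
    · simp [Frow, Ecol]
    · intro a _ ha
      have hne : spec l hl a₀ ≠ spec l hl a := fun h => ha (spec_inj l hl h).symm
      simp [Frow, hne]
    · intro h
      exact absurd (Finset.mem_univ a₀) h
  · push_neg at hy
    have hJ : ∀ z, Jmat l z y = 0 := Jmat_eq_zero l hl hy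
    rw [Matrix.mul_apply]
    rw [Finset.sum_eq_zero fun z _ => by
      simp [Matrix.smul_apply, hJ z], Finset.sum_eq_zero fun a _ => by
      simp [Frow, hy a]]

def Amat (u : ℂ) : Matrix (Fin 3) (Fin 3) ℂ := fun j i => if j = i then 0 else u ^ l j

lemma FE_eq (u : ℂ) :
    Frow l hl * Ecol l hl u = Matrix.fromBlocks 0 (Amat l u) (Amat l u) 0 := by
  have hFE : ∀ a b, (Frow l hl * Ecol l hl u) a b
      = (Pmat l u * (u • Jmat l)) (spec l hl a) (spec l hl b) := by
    intro a b
    have hterm : ∀ x : D l, Frow l hl a x * Ecol l hl u x b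
        = if x = spec l hl a then Ecol l hl u x b else 0 := by
      intro x
      simp only [Frow, ite_mul, one_mul, zero_mul]
    rw [Matrix.mul_apply, Finset.sum_congr rfl fun x _ => hterm x,
      Finset.sum_ite_eq' Finset.univ (spec l hl a) (fun x => Ecol l hl u x b)]
    simp [Ecol]
  ext a b
  rw [hFE]
  rcases a with j | j <;> rcases b with i | i <;>
    simp only [Matrix.fromBlocks_apply₁₁, Matrix.fromBlocks_apply₁₂,
      Matrix.fromBlocks_apply₂₁, Matrix.fromBlocks_apply₂₂, Matrix.zero_apply, Amat]
  · -- (inl, inl) : zero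
    rw [Matrix.mul_apply]
    apply Finset.sum_eq_zero
    intro z _
    by_cases hJP : JP l z (spec l hl (Sum.inl i))
    · have hz : z.2.2 = false := by
        rcases hJP.2 with ⟨-, hzb, -⟩ | ⟨hb, -⟩
        · exact hzb
        · exact absurd hb (by simp [spec])
      rw [Pmat, if_neg, zero_mul]
      rintro ⟨-, hbb, -⟩
      rw [hz] at hbb
      simp [spec] at hbb
    · simp [Matrix.smul_apply, Jmat, hJP]
  · -- (inl, inr) : turn at P
    have h2j := hl j
    rw [Matrix.mul_apply, Finset.sum_eq_single (⟨j, (⟨0, by omega⟩, true)⟩ : D l)]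
    · have hP : Pmat l u (spec l hl (Sum.inl j)) (⟨j, (⟨0, by omega⟩, true)⟩ : D l)
          = u ^ (l j - 1) := by
        rw [Pmat, if_pos ⟨rfl, rfl, Or.inl ⟨rfl, Nat.zero_le _⟩⟩]
        simp [spec]
      rw [hP, Matrix.smul_apply, smul_eq_mul]
      by_cases hji : j = i
      · subst hji
        rw [Jmat, if_neg (fun h => h.1 rfl), if_pos rfl]
        ring
      · rw [Jmat, if_pos ⟨hji, Or.inr ⟨rfl, rfl, rfl, rfl⟩⟩, if_neg hji]
        rw [mul_one, ← pow_succ]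
        congr 1
        omega
    · intro z _ hz
      by_cases hJP : JP l z (spec l hl (Sum.inr i))
      · have hzb : z.2.2 = true ∧ (z.2.1 : ℕ) = 0 := by
          rcases hJP.2 with ⟨hb, -⟩ | ⟨-, hzb, -, hz1⟩
          · exact absurd hb (by simp [spec])
          · exact ⟨hzb, hz1⟩
        by_cases hz1 : z.1 = j
        · exact absurd ((D_ext_iff l).mpr ⟨hz1, by simp [hzb.2], by simp [hzb.1]⟩) hz
        · rw [Pmat, if_neg, zero_mul]
          rintro ⟨h1, -⟩
          exact hz1 h1.symm
      · simp [Matrix.smul_apply, Jmat, hJP]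
    · intro h
      exact absurd (Finset.mem_univ _) h
  · -- (inr, inl) : turn at Q
    have h2j := hl j
    rw [Matrix.mul_apply, Finset.sum_eq_single (⟨j, (⟨l j - 1, by omega⟩, false)⟩ : D l)]
    · have hP : Pmat l u (spec l hl (Sum.inr j)) (⟨j, (⟨l j - 1, by omega⟩, false)⟩ : D l)
          = u ^ (l j - 1) := by
        rw [Pmat, if_pos ⟨rfl, rfl, Or.inr ⟨rfl, Nat.zero_le _⟩⟩]
        simp [spec]
      rw [hP, Matrix.smul_apply, smul_eq_mul]
      by_cases hji : j = i
      · subst hji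
        rw [Jmat, if_neg (fun h => h.1 rfl), if_pos rfl]
        ring
      · rw [Jmat, if_pos ⟨hji, Or.inl ⟨rfl, rfl, by simp [spec], rfl⟩⟩, if_neg hji]
        rw [mul_one, ← pow_succ]
        congr 1
        omega
    · intro z _ hz
      by_cases hJP : JP l z (spec l hl (Sum.inl i))
      · have hzb : z.2.2 = false ∧ (z.2.1 : ℕ) = l z.1 - 1 := by
          rcases hJP.2 with ⟨-, hzb, -, hz1⟩ | ⟨hb, -⟩
          · exact ⟨hzb, hz1⟩
          · exact absurd hb (by simp [spec])
        by_cases hz1 : z.1 = j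
        · refine absurd ((D_ext_iff l).mpr ⟨hz1, ?_, by simp [hzb.1]⟩) hz
          simp [hzb.2, hz1]
        · rw [Pmat, if_neg, zero_mul]
          rintro ⟨h1, -⟩
          exact hz1 h1.symm
      · simp [Matrix.smul_apply, Jmat, hJP]
    · intro h
      exact absurd (Finset.mem_univ _) h
  · -- (inr, inr) : zero
    rw [Matrix.mul_apply]
    apply Finset.sum_eq_zero
    intro z _
    by_cases hJP : JP l z (spec l hl (Sum.inr i))
    · have hz : z.2.2 = true := by
        rcases hJP.2 with ⟨hb, -⟩ | ⟨-, hzb, -⟩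
        · exact absurd hb (by simp [spec])
        · exact hzb
      rw [Pmat, if_neg, zero_mul]
      rintro ⟨-, hbb, -⟩
      rw [hz] at hbb
      simp [spec] at hbb
    · simp [Matrix.smul_apply, Jmat, hJP]

set_option maxRecDepth 8000 in
set_option maxHeartbeats 1000000 in
lemma final (u : ℂ) :
    Matrix.det (1 - u • nbMatrix (thetaGraph l)) =
      (1 - (u ^ l 0 * u ^ l 1 + u ^ l 1 * u ^ l 2 + u ^ l 2 * u ^ l 0)
          - 2 * (u ^ l 0 * u ^ l 1 * u ^ l 2)) *
      (1 - (u ^ l 0 * u ^ l 1 + u ^ l 1 * u ^ l 2 + u ^ l 2 * u ^ l 0)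
          + 2 * (u ^ l 0 * u ^ l 1 * u ^ l 2)) := by
  rw [det_transfer l hl u]
  have hinv : (1 - u • Smat l) * Pmat l u = 1 := mul_eq_one_comm.mp (P_inv l u)
  have hfact : (1 : Matrix (D l) (D l) ℂ) - u • (Smat l + Jmat l)
      = (1 - u • Smat l) * (1 - Pmat l u * (u • Jmat l)) := by
    rw [Matrix.mul_sub, Matrix.mul_one, ← Matrix.mul_assoc, hinv, Matrix.one_mul, smul_add]
    abel
  rw [hfact, Matrix.det_mul, det_S l u, one_mul, K_factor l hl u]
  have hswap : (1 - Ecol l hl u * Frow l hl).det = (1 - Frow l hl * Ecol l hl u).det := by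
    have h := Matrix.det_one_add_mul_comm (Ecol l hl u) (-(Frow l hl))
    rw [Matrix.mul_neg, Matrix.neg_mul, ← sub_eq_add_neg, ← sub_eq_add_neg] at h
    exact h
  rw [hswap, FE_eq l hl u]
  have hblocks : (1 : Matrix (Fin 3 ⊕ Fin 3) (Fin 3 ⊕ Fin 3) ℂ)
      - Matrix.fromBlocks 0 (Amat l u) (Amat l u) 0
      = Matrix.fromBlocks 1 (-(Amat l u)) (-(Amat l u)) 1 := by
    rw [← Matrix.fromBlocks_one]
    ext (a | a) (b | b) <;>
      simp [Matrix.fromBlocks, Matrix.sub_apply]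
  rw [hblocks, Matrix.det_fromBlocks_one₁₁, Matrix.neg_mul, Matrix.mul_neg, neg_neg,
    Matrix.det_fin_three]
  simp only [Matrix.sub_apply, Matrix.one_apply, Matrix.mul_apply, Fin.sum_univ_three, Amat]
  norm_num [Fin.ext_iff]
  ring

end Theta


/-- The inverse Ihara–Selberg L-function of the theta graph with path lengths
`l₁, l₂, l₃ ≥ 2`: with `aᵢ = u^{lᵢ}`,
`det(I − u·B) = (1 − (a₁a₂ + a₂a₃ + a₃a₁) − 2a₁a₂a₃)·(1 − (a₁a₂ + a₂a₃ + a₃a₁) + 2a₁a₂a₃)`. -/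
theorem theta_graph_L_function (l : Fin 3 → ℕ) (hl : ∀ i, 2 ≤ l i) (u : ℂ) :
    Matrix.det (1 - u • nbMatrix (thetaGraph l)) =
      (1 - (u ^ l 0 * u ^ l 1 + u ^ l 1 * u ^ l 2 + u ^ l 2 * u ^ l 0)
          - 2 * (u ^ l 0 * u ^ l 1 * u ^ l 2)) *
      (1 - (u ^ l 0 * u ^ l 1 + u ^ l 1 * u ^ l 2 + u ^ l 2 * u ^ l 0)
          + 2 * (u ^ l 0 * u ^ l 1 * u ^ l 2)) := by
  exact Theta.final l hl u
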